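/- arXiv:1409.0599 — 3 statements merged into one kernel-verified Lean document; each statement's English description precedes it below -/
import Mathlib

section
/- Let D be a discrete valuation ring with uniformizer z, let ω ≥ 1, and let F be an ω × n matrix over D of rank ω whose column module has invariant factors z^{i_1}, ..., z^{i_ω} with i_1 ≤ ... ≤ i_ω. If A is an n × ω matrix over D and δ ≥ 0 an integer such that F · A = z^δ · I_ω, then δ ≥ i_ω. -/
/-- If the column module of the full-rank `ω × n` matrix `F` over a DVR `D` has
invariant factors `z^{i_1}, …, z^{i_ω}` (expressed via a Smith normal form
decomposition `F = U · diag(z^{i_j}) · V` with `U, V` invertible and `i` monotone),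
and if `F · A = z^δ · I`, then `δ ≥ i_ω`, the largest invariant factor valuation. -/
theorem stmt4 {ω n : ℕ} (hω : 0 < ω) (hn : ω ≤ n)
    (D : Type*) [CommRing D] [IsDomain D] [IsDiscreteValuationRing D]
    (z : D) (hz : Irreducible z)
    (i : Fin ω → ℕ) (hmono : Monotone i)
    (U : Matrix (Fin ω) (Fin ω) D) (V : Matrix (Fin n) (Fin n) D)
    (hU : IsUnit U) (hV : IsUnit V)
    (F : Matrix (Fin ω) (Fin n) D)
    (hF : F = U * (Matrix.of fun (j : Fin ω) (k : Fin n) =>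
        if (j : ℕ) = (k : ℕ) then z ^ i j else 0) * V)
    (A : Matrix (Fin n) (Fin ω) D) (δ : ℕ)
    (hA : F * A = z ^ δ • (1 : Matrix (Fin ω) (Fin ω) D)) :
    i ⟨ω - 1, by omega⟩ ≤ δ := by
  set S : Matrix (Fin ω) (Fin n) D := Matrix.of fun (j : Fin ω) (k : Fin n) =>
      if (j : ℕ) = (k : ℕ) then z ^ i j else 0 with hS
  have hdet : IsUnit U.det := (Matrix.isUnit_iff_isUnit_det U).mp hU
  have hUinv : U⁻¹ * U = 1 := Matrix.nonsing_inv_mul U hdet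
  -- S * (V * A) = z^δ • U⁻¹
  have key : S * (V * A) = z ^ δ • U⁻¹ := by
    have h1 : U⁻¹ * (F * A) = z ^ δ • U⁻¹ := by
      rw [hA, Matrix.mul_smul, Matrix.mul_one]
    simp only [hF, Matrix.mul_assoc] at h1
    rw [← Matrix.mul_assoc U⁻¹ U, hUinv, Matrix.one_mul] at h1
    exact h1
  set r : Fin ω := ⟨ω - 1, by omega⟩ with hr
  set k : Fin n := ⟨ω - 1, by omega⟩ with hk
  -- each entry of row r of S * (V*A) is z^{i r} * something
  have hrow : ∀ j : Fin ω, z ^ i r ∣ z ^ δ * U⁻¹ r j := by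
    intro j
    have := congrFun (congrFun key r) j
    rw [Matrix.mul_apply] at this
    have hsum : ∑ m, S r m * (V * A) m j = z ^ i r * (V * A) k j := by
      rw [Finset.sum_eq_single k]
      · simp [hS, hk, hr]
      · intro b _ hb
        have : (r : ℕ) ≠ (b : ℕ) := by
          intro h; apply hb; exact Fin.ext h.symm
        simp [hS, this]
      · simp
    rw [hsum] at this
    rw [Matrix.smul_apply, smul_eq_mul] at this
    exact ⟨(V * A) k j, this.symm⟩
  -- some entry of row r of U⁻¹ is not divisible by z
  have hent : ∃ j : Fin ω, ¬ z ∣ U⁻¹ r j := by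
    by_contra h
    push_neg at h
    have h1 : z ∣ (U⁻¹ * U) r r := by
      rw [Matrix.mul_apply]
      exact Finset.dvd_sum fun m _ => (h m).mul_right _
    rw [hUinv] at h1
    simp [Matrix.one_apply] at h1
    exact hz.not_isUnit (isUnit_of_dvd_one h1)
  obtain ⟨j, hj⟩ := hent
  have hdvd : z ^ i r ∣ z ^ δ :=
    (hz.prime.pow_dvd_of_dvd_mul_right _ hj) (hrow j)
  have hz0 : z ≠ 0 := hz.ne_zero
  exact (pow_dvd_pow_iff hz0 hz.not_isUnit).mp hdvd
end

section
/- Let D be a discrete valuation ring with uniformizer z and valuation v, and let F be an ω × n matrix over D of rank ω. Let Δ_j denote a greatest common divisor of the determinants of all j × j submatrices of F. Then the minimum δ ≥ 0 for which there exists an n × ω matrix A over D with F · A = z^δ · I_ω equals v(Δ_ω) - v(Δ_{ω-1}). -/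
open Matrix

/-- In a DVR, an irreducible divides every non-unit. -/
lemma dvr_dvd_of_not_isUnit {D : Type*} [CommRing D] [IsDomain D] [IsDiscreteValuationRing D]
    {z w : D} (hz : Irreducible z) (hw : ¬ IsUnit w) : z ∣ w := by
  rw [← Ideal.mem_span_singleton, ← hz.maximalIdeal_eq]
  exact IsLocalRing.mem_maximalIdeal w |>.mpr hw

/-- Multilinearity of det in a column, summed version. -/
lemma det_updateCol_sum' {k : ℕ} {R : Type*} [CommRing R]
    (M : Matrix (Fin k) (Fin k) R) (j : Fin k) {ι : Type*} [DecidableEq ι] (s : Finset ι) (f : ι → Fin k → R) :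
    (M.updateCol j (fun a => ∑ p ∈ s, f p a)).det
      = ∑ p ∈ s, (M.updateCol j (f p)).det := by
  induction s using Finset.induction_on with
  | empty =>
      simp only [Finset.sum_empty]
      exact det_eq_zero_of_column_eq_zero j (fun i => by simp)
  | @insert a t ha ih =>
      simp only [Finset.sum_insert ha]
      rw [show (fun a_1 => f a a_1 + ∑ p ∈ t, f p a_1)
          = (f a + fun a_1 => ∑ p ∈ t, f p a_1) from rfl,
        det_updateCol_add, ih]

/-- Let `F` be an `ω × n` matrix of rank `ω` over a DVR `D` with uniformizer `z`.
Let `Δ_ω` (resp. `Δ_{ω-1}`) be a gcd of all `ω × ω` (resp. `(ω-1) × (ω-1)`) minors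
of `F`, with valuations `vω` and `vω₁` (so `Δ_ω ∼ z^{vω}`, `Δ_{ω-1} ∼ z^{vω₁}`).
Then the minimum `δ ≥ 0` for which `F · A = z^δ · I` is solvable equals
`v(Δ_ω) - v(Δ_{ω-1})`. -/
theorem stmt7 {ω n : ℕ} (hω : 0 < ω) (hn : ω ≤ n)
    (D : Type*) [CommRing D] [IsDomain D] [IsDiscreteValuationRing D]
    (z : D) (hz : Irreducible z)
    (F : Matrix (Fin ω) (Fin n) D) (hrank : F.rank = ω)
    (Δω Δω₁ : D) (vω vω₁ : ℕ)
    (hgcdω : (∀ c : Fin ω → Fin n, Δω ∣ (F.submatrix id c).det) ∧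
      ∀ e : D, (∀ c : Fin ω → Fin n, e ∣ (F.submatrix id c).det) → e ∣ Δω)
    (hgcdω₁ : (∀ (r : Fin (ω - 1) → Fin ω) (c : Fin (ω - 1) → Fin n),
        Δω₁ ∣ (F.submatrix r c).det) ∧
      ∀ e : D, (∀ (r : Fin (ω - 1) → Fin ω) (c : Fin (ω - 1) → Fin n),
        e ∣ (F.submatrix r c).det) → e ∣ Δω₁)
    (hvω : Associated (z ^ vω) Δω) (hvω₁ : Associated (z ^ vω₁) Δω₁) :
    IsLeast {δ : ℕ | ∃ A : Matrix (Fin n) (Fin ω) D,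
      F * A = z ^ δ • (1 : Matrix (Fin ω) (Fin ω) D)} (vω - vω₁) := by
  obtain ⟨m, rfl⟩ : ∃ m, ω = m + 1 := ⟨ω - 1, (Nat.succ_pred_eq_of_pos hω).symm⟩
  have hz0 : z ≠ 0 := hz.ne_zero
  have hzu : ¬ IsUnit z := hz.not_isUnit
  have powle : ∀ a b : ℕ, z ^ a ∣ z ^ b → a ≤ b := fun a b h =>
    (pow_dvd_pow_iff hz0 hzu).mp h
  have hdvdω : ∀ c : Fin (m+1) → Fin n, z ^ vω ∣ (F.submatrix id c).det :=
    fun c => hvω.dvd.trans (hgcdω.1 c)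
  have hdvdω₁ : ∀ (r : Fin m → Fin (m+1)) (c : Fin m → Fin n),
      z ^ vω₁ ∣ (F.submatrix r c).det :=
    fun r c => hvω₁.dvd.trans (hgcdω₁.1 r c)
  -- vω₁ ≤ vω
  have hv_le : vω₁ ≤ vω := by
    apply powle
    refine (hgcdω.2 _ ?_).trans hvω.symm.dvd
    intro c
    rw [det_succ_row_zero]
    refine Finset.dvd_sum fun j _ => ?_
    refine Dvd.dvd.mul_left ?_ _
    have : (F.submatrix id c).submatrix Fin.succ j.succAbove
        = F.submatrix Fin.succ (c ∘ j.succAbove) := by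
      simp [submatrix_submatrix]
    rw [this]
    exact hdvdω₁ _ _
  constructor
  · -- membership
    show ∃ A : Matrix (Fin n) (Fin (m+1)) D,
      F * A = z ^ (vω - vω₁) • (1 : Matrix (Fin (m+1)) (Fin (m+1)) D)
    obtain ⟨c₀, hc₀⟩ : ∃ c : Fin (m+1) → Fin n,
        ¬ z^(vω+1) ∣ (F.submatrix id c).det := by
      by_contra h
      push_neg at h
      have h2 : z^(vω+1) ∣ z^vω := (hgcdω.2 _ h).trans hvω.symm.dvd
      have := powle _ _ h2; omega
    set B := F.submatrix id c₀ with hBdef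
    obtain ⟨w, hw⟩ := hdvdω c₀
    have hwu : IsUnit w := by
      by_contra h
      obtain ⟨w', hw'⟩ := dvr_dvd_of_not_isUnit hz h
      exact hc₀ ⟨w', by rw [hw, hw', pow_succ]; ring⟩
    have hadj : ∀ i j, z^vω₁ ∣ B.adjugate i j := by
      intro i j
      rw [Matrix.adjugate_fin_succ_eq_det_submatrix]
      refine Dvd.dvd.mul_left ?_ _
      have : B.submatrix j.succAbove i.succAbove
          = F.submatrix j.succAbove (c₀ ∘ i.succAbove) := by
        simp [hBdef, submatrix_submatrix]
      rw [this]
      exact hdvdω₁ _ _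
    choose A₀ hA₀ using hadj
    set u := hwu.unit with hu
    have hwu' : (↑u⁻¹ : D) * w = 1 := by
      rw [← hwu.unit_spec, ← hu, Units.inv_mul]
    refine ⟨Matrix.of (fun p q => ∑ k, if c₀ k = p then A₀ k q * (↑u⁻¹ : D) else 0), ?_⟩
    have key : ∀ i q, (F * Matrix.of (fun p q => ∑ k,
        if c₀ k = p then A₀ k q * (↑u⁻¹ : D) else 0)) i q
        = (↑u⁻¹ : D) * ((B * Matrix.of A₀) i q) := by
      intro i q
      rw [mul_apply, mul_apply, Finset.mul_sum]
      simp only [Matrix.of_apply, Finset.mul_sum, mul_ite, mul_zero]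
      rw [Finset.sum_comm]
      refine Finset.sum_congr rfl fun k _ => ?_
      simp only [Finset.sum_ite_eq, Finset.mem_univ, if_true]
      have : B i k = F i (c₀ k) := rfl
      rw [this]; ring
    have h5 : z ^ vω₁ • (B * Matrix.of A₀)
        = B.det • (1 : Matrix (Fin (m+1)) (Fin (m+1)) D) := by
      rw [← Matrix.mul_adjugate B]
      ext i j
      simp only [Matrix.smul_apply, mul_apply, Finset.mul_sum, smul_eq_mul, Matrix.of_apply]
      refine Finset.sum_congr rfl fun k _ => ?_
      rw [hA₀]; ring
    have h6 : ∀ i j, (B * Matrix.of A₀) i j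
        = (z^(vω-vω₁) * w) * (1 : Matrix (Fin (m+1)) (Fin (m+1)) D) i j := by
      intro i j
      have h7 := congr_fun (congr_fun h5 i) j
      simp only [Matrix.smul_apply, smul_eq_mul] at h7
      refine mul_left_cancel₀ (pow_ne_zero vω₁ hz0) ?_
      rw [h7, hw, show z ^ vω = z ^ vω₁ * z ^ (vω - vω₁) by
        rw [← pow_add]; congr 1; omega]
      ring
    ext i j
    rw [key i j, h6 i j]
    have : (↑u⁻¹ : D) * (z ^ (vω - vω₁) * w * (1 : Matrix (Fin (m+1)) (Fin (m+1)) D) i j)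
        = ((↑u⁻¹ : D) * w) * (z ^ (vω - vω₁) * (1 : Matrix (Fin (m+1)) (Fin (m+1)) D) i j) := by
      ring
    rw [this, hwu', one_mul, Matrix.smul_apply, smul_eq_mul]
  · -- lower bound
    rintro δ ⟨A, hA⟩
    rw [tsub_le_iff_right]
    by_cases hle : vω ≤ δ
    · omega
    push_neg at hle
    -- Claim: for rows i.succAbove
    have claim : ∀ (i : Fin (m+1)) (c : Fin m → Fin n),
        z ^ vω ∣ z ^ δ * (F.submatrix i.succAbove c).det := by
      intro i c
      set G : Matrix (Fin (m+1)) (Fin (m+1)) D :=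
        Matrix.of (fun a b => Fin.cases ((F * A) a i) (fun b' => F a (c b')) b) with hG
      have hsub : ∀ a : Fin (m+1), G.submatrix a.succAbove Fin.succ
          = F.submatrix a.succAbove c := by
        intro a; ext x y; simp [hG]
      have hdvdG : z ^ vω ∣ G.det := by
        have h1 : G = G.updateCol 0 (fun a => ∑ p, A p i • F a p) := by
          have : (fun a => ∑ p, A p i • F a p) = fun a => G a 0 := by
            funext a
            simp [hG, mul_apply, smul_eq_mul, mul_comm]
          rw [this, updateCol_eq_self]
        rw [h1, det_updateCol_sum' G 0 Finset.univ (fun p a => A p i • F a p)]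
        refine Finset.dvd_sum fun p _ => ?_
        have h2 : (G.updateCol 0 (fun a => A p i • F a p)).det
            = A p i * (G.updateCol 0 (fun a => F a p)).det := by
          exact det_updateCol_smul G 0 (A p i) (fun a => F a p)
        rw [h2]
        have h3 : G.updateCol 0 (fun a => F a p) = F.submatrix id (Fin.cases p c) := by
          ext a b
          refine Fin.cases ?_ (fun b' => ?_) b <;>
            simp [hG, Matrix.updateCol_apply, Fin.succ_ne_zero]
        rw [h3]
        exact (hdvdω _).mul_left _
      have hval : G.det = (-1)^(i:ℕ) * (z ^ δ * (F.submatrix i.succAbove c).det) := by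
        rw [det_succ_column_zero]
        rw [Finset.sum_eq_single i]
        · rw [hsub i]
          have : G i 0 = z ^ δ := by simp [hG, hA, Matrix.one_apply]
          rw [this]; ring
        · intro b _ hb
          have : G b 0 = 0 := by simp [hG, hA, Matrix.one_apply, hb]
          rw [this]; ring
        · intro h; exact absurd (Finset.mem_univ i) h
      rw [hval] at hdvdG
      rcases neg_one_pow_eq_or D (i:ℕ) with h | h <;> rw [h] at hdvdG
      · simpa using hdvdG
      · simpa [neg_mul, dvd_neg] using hdvdG
    have claim2 : ∀ (r : Fin m → Fin (m+1)) (c : Fin m → Fin n),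
        z ^ (vω - δ) ∣ (F.submatrix r c).det := by
      have hcancel : ∀ (i : Fin (m+1)) (c : Fin m → Fin n),
          z ^ (vω - δ) ∣ (F.submatrix i.succAbove c).det := by
        intro i c
        have h1 := claim i c
        rw [show vω = δ + (vω - δ) by omega, pow_add] at h1
        exact (mul_dvd_mul_iff_left (pow_ne_zero δ hz0)).mp h1
      intro r c
      by_cases hinj : Function.Injective r
      · -- find i not in range r
        have hcard : ((Finset.univ.image r)ᶜ : Finset (Fin (m+1))).Nonempty := by
          rw [← Finset.card_pos, Finset.card_compl, Finset.card_image_of_injective _ hinj]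
          simp
        obtain ⟨i, hi⟩ := hcard
        rw [Finset.mem_compl, Finset.mem_image] at hi
        push_neg at hi
        have hne : ∀ k, r k ≠ i := fun k => hi k (Finset.mem_univ k)
        choose σf hσf using fun k => Fin.exists_succAbove_eq (hne k)
        have hσinj : Function.Injective σf := by
          intro a b hab
          apply hinj
          rw [← hσf a, ← hσf b, hab]
        let σ : Equiv.Perm (Fin m) := Equiv.ofBijective σf
          ((Finite.injective_iff_bijective).mp hσinj)
        have heq : F.submatrix r c = (F.submatrix i.succAbove c).submatrix σ id := by
          ext a b
          simp [σ, Equiv.ofBijective, hσf a]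
        rw [heq, det_permute]
        exact (hcancel i c).mul_left _
      · -- not injective: det = 0
        rw [Function.not_injective_iff] at hinj
        obtain ⟨a, b, hab, hne⟩ := hinj
        have : (F.submatrix r c).det = 0 := by
          apply det_zero_of_row_eq hne
          ext l
          simp [hab]
        rw [this]
        exact dvd_zero _
    have hfin : z ^ (vω - δ) ∣ z ^ vω₁ := (hgcdω₁.2 _ claim2).trans hvω₁.symm.dvd
    have := powle _ _ hfin
    omega
end

section
/- Let D be a discrete valuation ring with uniformizer z, and let F be an ω × n matrix over D. Suppose there exist an n × ω matrix A over D and δ ≥ 0 such that F · A ≡ z^δ · I_ω (mod z^{δ+1}). Then F has rank ω over the fraction field of D, and every invariant factor z^{i_j} of the column module of F satisfies i_j ≤ δ. -/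
open Matrix IsLocalRing

/-- If `F · A ≡ z^δ · I (mod z^{δ+1})` for some `A` over the DVR `D`, then `F` has
rank `ω` over the fraction field of `D`, and every invariant factor `z^{i_j}` of the
column module of `F` (read off from any Smith normal form of `F`) satisfies
`i_j ≤ δ`. -/
theorem stmt11 {ω n : ℕ}
    (D : Type*) [CommRing D] [IsDomain D] [IsDiscreteValuationRing D]
    (z : D) (hz : Irreducible z)
    (F : Matrix (Fin ω) (Fin n) D) (A : Matrix (Fin n) (Fin ω) D) (δ : ℕ)
    (h : ∀ j k, (F * A - z ^ δ • (1 : Matrix (Fin ω) (Fin ω) D)) j k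
      ∈ Ideal.span {z ^ (δ + 1)}) :
    (F.map (algebraMap D (FractionRing D))).rank = ω ∧
    ∀ (i : Fin ω → ℕ) (U : Matrix (Fin ω) (Fin ω) D) (V : Matrix (Fin n) (Fin n) D),
      IsUnit U → IsUnit V →
      F = U * (Matrix.of fun (j : Fin ω) (k : Fin n) =>
        if (j : ℕ) = (k : ℕ) then z ^ i j else 0) * V →
      ∀ j, i j ≤ δ := by
  have hz0 : z ≠ 0 := hz.ne_zero
  -- choose B with F*A - z^δ•1 = z^(δ+1) • B
  choose B hB using fun j k => Ideal.mem_span_singleton.mp (h j k)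
  have hM : F * A = z ^ δ • ((1 : Matrix (Fin ω) (Fin ω) D) + z • Matrix.of B) := by
    ext j k
    have := hB j k
    simp only [Matrix.sub_apply, Matrix.smul_apply, smul_eq_mul] at this ⊢
    simp only [Matrix.add_apply, Matrix.smul_apply, Matrix.of_apply, smul_eq_mul]
    have h2 : (F * A) j k = z ^ δ * (1 : Matrix (Fin ω) (Fin ω) D) j k
        + z ^ (δ + 1) * B j k := by linear_combination this
    rw [h2]; ring
  -- det (1 + z•B) is a unit
  have hzmem : z ∈ maximalIdeal D := (mem_maximalIdeal z).2 hz.not_isUnit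
  have hIdet : IsUnit ((1 + z • Matrix.of B).det) := by
    by_contra hnu
    have hmem : (1 + z • Matrix.of B).det ∈ maximalIdeal D := hnu
    have hone : (1 : D) ∈ maximalIdeal D := by
      have hd : (1 + z • Matrix.of B).det - 1 ∈ maximalIdeal D := by
        set q := Ideal.Quotient.mk (maximalIdeal D)
        have hmap : (1 + z • Matrix.of B).map q = 1 := by
          ext a b
          simp only [Matrix.map_apply, Matrix.add_apply, Matrix.smul_apply,
            Matrix.of_apply, smul_eq_mul, _root_.map_add, _root_.map_mul,
            Ideal.Quotient.eq_zero_iff_mem.mpr hzmem, zero_mul, add_zero]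
          simp [Matrix.one_apply, apply_ite q, show q z = 0 from Ideal.Quotient.eq_zero_iff_mem.mpr hzmem]
        have hqd : q ((1 + z • Matrix.of B).det) = 1 := by
          have h5 : q ((1 + z • Matrix.of B).det) = ((1 + z • Matrix.of B).map q).det :=
            q.map_det _
          rw [h5, hmap, Matrix.det_one]
        rw [← Ideal.Quotient.eq_zero_iff_mem, _root_.map_sub, hqd, _root_.map_one,
          sub_self]
      have := Ideal.sub_mem _ hmem hd
      simpa using this
    exact (maximalIdeal.isMaximal D).ne_top
      (Ideal.eq_top_of_isUnit_mem _ hone isUnit_one)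
  have hdetM : (F * A).det ≠ 0 := by
    rw [hM, Matrix.det_smul]
    exact mul_ne_zero (pow_ne_zero _ (pow_ne_zero _ hz0)) hIdet.ne_zero
  -- rank part
  have hrank : (F.map (algebraMap D (FractionRing D))).rank = ω := by
    set φ := algebraMap D (FractionRing D)
    have hinj : Function.Injective φ := IsFractionRing.injective D (FractionRing D)
    have hdet : ((F * A).map φ).det ≠ 0 := by
      have h5 : ((F * A).map φ).det = φ ((F * A).det) := (RingHom.map_det φ _).symm
      rw [h5]
      exact fun hh => hdetM (hinj (by simpa using hh))
    have hu : IsUnit ((F * A).map φ) :=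
      (Matrix.isUnit_iff_isUnit_det _).2 (isUnit_iff_ne_zero.2 hdet)
    have hr : ((F * A).map φ).rank = ω := by
      rw [Matrix.rank_of_isUnit _ hu, Fintype.card_fin]
    refine le_antisymm ?_ ?_
    · simpa using (F.map φ).rank_le_card_height
    · calc ω = ((F * A).map φ).rank := hr.symm
        _ = (F.map φ * A.map φ).rank := by rw [Matrix.map_mul]
        _ ≤ (F.map φ).rank := Matrix.rank_mul_le_left _ _
  refine ⟨hrank, ?_⟩
  have hωn : ω ≤ n := by
    have := (F.map (algebraMap D (FractionRing D))).rank_le_card_width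
    simpa [hrank] using this
  intro i U V hU hV hF j
  set S : Matrix (Fin ω) (Fin n) D := Matrix.of fun (j : Fin ω) (k : Fin n) =>
    if (j : ℕ) = (k : ℕ) then z ^ i j else 0 with hS
  set U' : Matrix (Fin ω) (Fin ω) D := ↑hU.unit⁻¹ with hU'
  have hU'U : U' * U = 1 := hU.val_inv_mul
  set W : Matrix (Fin ω) (Fin ω) D :=
    U' * ((1 : Matrix (Fin ω) (Fin ω) D) + z • Matrix.of B) with hW
  have hkey : S * (V * A) = z ^ δ • W := by
    have h1 : U' * (F * A) = S * (V * A) := by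
      rw [hF]
      rw [show U * S * V * A = U * (S * (V * A)) by rw [Matrix.mul_assoc, Matrix.mul_assoc], ← Matrix.mul_assoc, hU'U, one_mul]
    have h2 : U' * (F * A) = z ^ δ • W := by
      rw [hM, Matrix.mul_smul, hW]
    rw [← h1, h2]
  -- det W is a unit
  have hWdet : IsUnit W.det := by
    rw [hW, Matrix.det_mul]
    exact ((Matrix.isUnit_iff_isUnit_det _).1 (hU.unit⁻¹).isUnit).mul hIdet
  -- row j of W has an entry not divisible by z
  have hrow : ∃ k, ¬ z ∣ W j k := by
    by_contra hall
    push_neg at hall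
    set q := Ideal.Quotient.mk (maximalIdeal D)
    have hzero : ∀ k, (W.map q) j k = 0 := fun k => by
      obtain ⟨c, hc⟩ := hall k
      simp only [Matrix.map_apply, hc]
      exact Ideal.Quotient.eq_zero_iff_mem.mpr (Ideal.mul_mem_right _ _ hzmem)
    have hdet0 : (W.map q).det = 0 := Matrix.det_eq_zero_of_row_eq_zero j hzero
    have : IsUnit ((W.map q).det) := by
      have h5 : (W.map q).det = q W.det := (RingHom.map_det q W).symm
      rw [h5]
      exact hWdet.map q
    rw [hdet0] at this
    have : Nontrivial (D ⧸ maximalIdeal D) :=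
      Ideal.Quotient.nontrivial_iff.mpr (maximalIdeal.isMaximal D).ne_top
    exact not_isUnit_zero ‹IsUnit (0 : D ⧸ maximalIdeal D)›
  obtain ⟨k, hk⟩ := hrow
  -- z^(i j) divides z^δ * W j k
  have hdvd : z ^ i j ∣ z ^ δ * W j k := by
    rw [← Matrix.ext_iff] at hkey
    have hentry : (S * (V * A)) j k = z ^ δ * W j k := by
      have := hkey j k
      simpa using this
    rw [← hentry, Matrix.mul_apply]
    set j' : Fin n := ⟨(j : ℕ), lt_of_lt_of_le j.isLt hωn⟩
    have hsum : ∑ m, S j m * (V * A) m k = z ^ i j * (V * A) j' k := by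
      rw [Finset.sum_eq_single_of_mem j' (Finset.mem_univ _)]
      · simp [hS, j']
      · intro m _ hm
        have : (j : ℕ) ≠ (m : ℕ) := fun hjm => hm (by ext; exact hjm.symm)
        simp [hS, this]
    rw [hsum]
    exact Dvd.intro _ rfl
  by_contra hij
  push_neg at hij
  have : z ^ (δ + 1) ∣ z ^ δ * W j k :=
    dvd_trans (pow_dvd_pow z hij) hdvd
  rw [pow_succ] at this
  exact hk ((mul_dvd_mul_iff_left (pow_ne_zero δ hz0)).mp this)
end
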